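/- Let b : [0,∞) → (0,∞) be continuous with solution w of w'' + b·w = 0, w(0) = 0, w'(0) = 1 monotone and bounded (an SL-bifurcator). Let c : [0,∞) → (0,∞) be continuous with c(r) ≥ b(r) for all r and c(r₀) > b(r₀) for some r₀. Then the solution y of y'' + c·y = 0, y(0) = 0, y'(0) = 1 has a second zero: there exists r > 0 with y(r) = 0. -/

import Mathlib

open Real Set Filter

private lemma sturm_deriv_diffble (f : ℝ → ℝ) (hf : ContDiff ℝ 2 f) :
    Differentiable ℝ (deriv f) := by
  have h2 : ContDiff ℝ ((1:ℕ)+1) f := by exact_mod_cast hf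
  exact ((contDiff_succ_iff_deriv.mp h2).2).2.differentiable (by norm_num)

private lemma sturm_pos_near (f : ℝ → ℝ) (hf : ContDiff ℝ 2 f) (h0 : f 0 = 0)
    (h1 : deriv f 0 = 1) :
    ∃ ε > 0, ∀ t, 0 < t → t ≤ ε → 0 < f t := by
  have hc : Continuous (deriv f) := hf.continuous_deriv (by norm_num)
  have hev : ∀ᶠ x in nhds (0:ℝ), 0 < deriv f x := by
    have : {x : ℝ | 0 < deriv f x} ∈ nhds (0:ℝ) := by
      apply (isOpen_lt continuous_const hc).mem_nhds
      simp [h1]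
    exact this
  rcases Metric.eventually_nhds_iff.mp hev with ⟨ε, hε, hball⟩
  refine ⟨ε/2, by positivity, fun t ht htε => ?_⟩
  have hmono : StrictMonoOn f (Icc 0 (ε/2)) := by
    apply strictMonoOn_of_deriv_pos (convex_Icc _ _) (hf.continuous.continuousOn)
    intro x hx
    rw [interior_Icc] at hx
    apply hball
    rw [Real.dist_eq, sub_zero, abs_of_pos hx.1]
    linarith [hx.2]
  have := hmono ⟨le_refl _, by positivity⟩ ⟨ht.le, htε⟩ ht
  rwa [h0] at this

/-- Boundary Theorem (comparison step): if `b` is an SL-bifurcator (the solution `w` of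
`w'' + b w = 0`, `w 0 = 0`, `w' 0 = 1` is monotone and bounded) and `c ≥ b` is continuous
and positive with `c r₀ > b r₀` somewhere, then the solution `y` of `y'' + c y = 0`,
`y 0 = 0`, `y' 0 = 1` has a second zero. -/
theorem stmt_7 (b c w y : ℝ → ℝ)
    (hb_cont : ContinuousOn b (Set.Ici 0))
    (hb_pos : ∀ r : ℝ, 0 ≤ r → 0 < b r)
    (hc_cont : ContinuousOn c (Set.Ici 0))
    (hc_pos : ∀ r : ℝ, 0 ≤ r → 0 < c r)
    (hw : ContDiff ℝ 2 w)
    (hwode : ∀ r : ℝ, 0 ≤ r → deriv (deriv w) r + b r * w r = 0)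
    (hw0 : w 0 = 0) (hw0' : deriv w 0 = 1)
    (hwmono : MonotoneOn w (Set.Ici 0))
    (hwbdd : BddAbove (w '' Set.Ici 0))
    (hcb : ∀ r : ℝ, 0 ≤ r → b r ≤ c r)
    (hstrict : ∃ r₀ : ℝ, 0 ≤ r₀ ∧ b r₀ < c r₀)
    (hy : ContDiff ℝ 2 y)
    (hyode : ∀ r : ℝ, 0 ≤ r → deriv (deriv y) r + c r * y r = 0)
    (hy0 : y 0 = 0) (hy0' : deriv y 0 = 1) :
    ∃ r : ℝ, 0 < r ∧ y r = 0 := by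
  by_contra hcon
  push_neg at hcon
  -- differentiability facts
  have hwd : Differentiable ℝ w := hw.differentiable (by norm_num)
  have hyd : Differentiable ℝ y := hy.differentiable (by norm_num)
  have hwd' : Differentiable ℝ (deriv w) := sturm_deriv_diffble w hw
  have hyd' : Differentiable ℝ (deriv y) := sturm_deriv_diffble y hy
  -- positivity of y on (0,∞)
  obtain ⟨εy, hεy, hyε⟩ := sturm_pos_near y hy hy0 hy0'
  obtain ⟨εw, hεw, hwε⟩ := sturm_pos_near w hw hw0 hw0'
  have hypos : ∀ r, 0 < r → 0 < y r := by
    intro r hr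
    rcases le_or_gt r εy with h | h
    · exact hyε r hr h
    · by_contra hneg
      push_neg at hneg
      have hylt : y r < 0 := lt_of_le_of_ne hneg (hcon r hr)
      have hy1 : 0 < y εy := hyε εy hεy le_rfl
      have hmem : (0:ℝ) ∈ y '' Icc εy r :=
        intermediate_value_Icc' h.le hyd.continuous.continuousOn ⟨hylt.le, hy1.le⟩
      obtain ⟨z, hz, hz0⟩ := hmem
      exact hcon z (lt_of_lt_of_le hεy hz.1) hz0
  -- positivity of w on (0,∞)
  have hwpos : ∀ r, 0 < r → 0 < w r := by
    intro r hr
    have hmin : 0 < min r εw := lt_min hr hεw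
    have h1 : 0 < w (min r εw) := hwε _ hmin (min_le_right _ _)
    have h2 : w (min r εw) ≤ w r :=
      hwmono (mem_Ici.mpr hmin.le) (mem_Ici.mpr hr.le) (min_le_left _ _)
    linarith
  -- bound for w
  obtain ⟨M, hM⟩ := hwbdd
  have hMle : ∀ r, 0 ≤ r → w r ≤ M := fun r hr => hM (mem_image_of_mem w (mem_Ici.mpr hr))
  have hMpos : 0 < M := lt_of_lt_of_le (hwpos 1 one_pos) (hMle 1 one_pos.le)
  -- the Wronskian
  set W : ℝ → ℝ := fun r => deriv w r * y r - w r * deriv y r with hWdef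
  have hWder : ∀ r, HasDerivAt W
      (deriv (deriv w) r * y r - w r * deriv (deriv y) r) r := by
    intro r
    have h1 : HasDerivAt (deriv w) (deriv (deriv w) r) r := (hwd' r).hasDerivAt
    have h2 : HasDerivAt y (deriv y r) r := (hyd r).hasDerivAt
    have h3 : HasDerivAt w (deriv w r) r := (hwd r).hasDerivAt
    have h4 : HasDerivAt (deriv y) (deriv (deriv y) r) r := (hyd' r).hasDerivAt
    have := (h1.mul h2).sub (h3.mul h4)
    convert this using 1
    · rfl
    · rfl
    · rfl
    · ring
  have hWdiff : Differentiable ℝ W := fun r => (hWder r).differentiableAt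
  have hWderiv : ∀ r, 0 ≤ r → deriv W r = (c r - b r) * (w r * y r) := by
    intro r hr
    rw [(hWder r).deriv]
    have h1 := hwode r hr
    have h2 := hyode r hr
    have hw2 : deriv (deriv w) r = -(b r * w r) := by linarith
    have hy2 : deriv (deriv y) r = -(c r * y r) := by linarith
    rw [hw2, hy2]; ring
  have hW0 : W 0 = 0 := by simp [hWdef, hw0, hy0]
  have hWmono : MonotoneOn W (Ici 0) := by
    apply monotoneOn_of_deriv_nonneg (convex_Ici 0) hWdiff.continuous.continuousOn
      hWdiff.differentiableOn
    intro x hx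
    rw [interior_Ici] at hx
    rw [hWderiv x hx.le]
    have h1 := hcb x hx.le
    have h2 := hwpos x hx
    have h3 := hypos x hx
    have : 0 ≤ c x - b x := by linarith
    positivity
  -- find a point where W is positive
  obtain ⟨r₀, hr₀, hbc⟩ := hstrict
  have hcw : ContinuousWithinAt (fun x => c x - b x) (Ici 0) r₀ :=
    (hc_cont.sub hb_cont) r₀ (mem_Ici.mpr hr₀)
  have hev : ∀ᶠ x in nhdsWithin r₀ (Ici 0), 0 < c x - b x := by
    apply hcw.eventually
    apply eventually_nhds_iff.mpr
    exact ⟨{t | 0 < t}, fun t ht => ht, isOpen_lt continuous_const continuous_id,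
      by simpa using hbc⟩
  obtain ⟨η, hη, hsub⟩ := Metric.mem_nhdsWithin_iff.mp hev
  set a : ℝ := r₀ + η/3 with hadef
  set a' : ℝ := r₀ + η/2 with ha'def
  have ha0 : 0 < a := by simp only [hadef]; linarith
  have ha'0 : 0 < a' := by simp only [ha'def]; linarith
  have haa' : a < a' := by simp only [hadef, ha'def]; linarith
  have hIcc : ∀ x ∈ Icc a a', 0 < c x - b x := by
    intro x hx
    apply hsub
    constructor
    · rw [Metric.mem_ball, Real.dist_eq]
      have h1 : a ≤ x := hx.1
      have h2 : x ≤ a' := hx.2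
      rw [abs_of_pos (by simp only [hadef] at h1; linarith)]
      simp only [ha'def] at h2; linarith
    · exact mem_Ici.mpr (by linarith [hx.1])
  have hWa' : 0 < W a' := by
    have hsm : StrictMonoOn W (Icc a a') := by
      apply strictMonoOn_of_deriv_pos (convex_Icc _ _) hWdiff.continuous.continuousOn
      intro x hx
      rw [interior_Icc] at hx
      have hx0 : 0 < x := lt_trans ha0 hx.1
      rw [hWderiv x hx0.le]
      exact mul_pos (hIcc x ⟨hx.1.le, hx.2.le⟩)
        (mul_pos (hwpos x hx0) (hypos x hx0))
    have h1 : W a < W a' := hsm ⟨le_rfl, haa'.le⟩ ⟨haa'.le, le_rfl⟩ haa'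
    have h2 : W 0 ≤ W a := hWmono (mem_Ici.mpr le_rfl) (mem_Ici.mpr ha0.le) ha0.le
    rw [hW0] at h2
    linarith
  set δ : ℝ := W a' with hδdef
  have hδ : 0 < δ := hWa'
  have hWge : ∀ r, a' ≤ r → δ ≤ W r := fun r hr =>
    hWmono (mem_Ici.mpr ha'0.le) (mem_Ici.mpr (le_trans ha'0.le hr)) hr
  -- the quotient g = y / w
  set g : ℝ → ℝ := fun r => y r / w r with hgdef
  have hgder : ∀ r, 0 < r → HasDerivAt g (-W r / (w r)^2) r := by
    intro r hr
    have hder := (hyd r).hasDerivAt.div (hwd r).hasDerivAt (ne_of_gt (hwpos r hr))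
    have hnum : -W r = deriv y r * w r - y r * deriv w r := by
      simp only [hWdef]; ring
    rw [hnum]
    exact hder
  have hgd : ∀ r, 0 < r → DifferentiableAt ℝ g r := fun r hr =>
    (hgder r hr).differentiableAt
  -- derivative bound for g on [a', ∞)
  have hgbound : ∀ r, a' ≤ r → deriv g r ≤ -(δ / M^2) := by
    intro r hr
    have hr0 : 0 < r := lt_of_lt_of_le ha'0 hr
    rw [(hgder r hr0).deriv]
    have hWr : δ ≤ W r := hWge r hr
    have hwr : 0 < w r := hwpos r hr0
    have hwM : w r ≤ M := hMle r hr0.le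
    have hsq : (w r)^2 ≤ M^2 := by nlinarith
    have h1 : δ / M^2 ≤ W r / (w r)^2 :=
      div_le_div₀ (le_trans hδ.le hWr) hWr (by positivity) hsq
    have : W r / (w r)^2 = -(-W r / (w r)^2) := by ring
    linarith [this ▸ h1]
  -- mean value theorem on [a', R]
  have hga' : 0 < g a' := div_pos (hypos a' ha'0) (hwpos a' ha'0)
  set R : ℝ := a' + (g a' + 1) * M^2 / δ with hRdef
  have hRa' : a' < R := by
    have : 0 < (g a' + 1) * M^2 / δ := by positivity
    simp only [hRdef]; linarith
  have hR0 : 0 < R := lt_trans ha'0 hRa'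
  have hcont : ContinuousOn g (Icc a' R) := by
    intro x hx
    exact ((hgd x (lt_of_lt_of_le ha'0 hx.1)).continuousAt).continuousWithinAt
  have hdiff : DifferentiableOn ℝ g (Ioo a' R) := fun x hx =>
    (hgd x (lt_trans ha'0 hx.1)).differentiableWithinAt
  obtain ⟨ξ, hξ, hslope⟩ := exists_deriv_eq_slope g hRa' hcont hdiff
  have hξbound : deriv g ξ ≤ -(δ / M^2) := hgbound ξ hξ.1.le
  have hslope' : g R - g a' = deriv g ξ * (R - a') := by
    rw [hslope, div_mul_cancel₀ _ (ne_of_gt (by linarith : (0:ℝ) < R - a'))]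
  have h1 : deriv g ξ * (R - a') ≤ -(δ / M^2) * (R - a') :=
    mul_le_mul_of_nonneg_right hξbound (by linarith)
  have hRsub : R - a' = (g a' + 1) * M^2 / δ := by simp only [hRdef]; ring
  have h2 : -(δ / M^2) * (R - a') = -(g a' + 1) := by
    rw [hRsub]
    field_simp
  have hgR : 0 < g R := div_pos (hypos R hR0) (hwpos R hR0)
  clear_value W a a' δ g R
  linarith
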